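/- (Lemma 3.1(ii), d = 3.) Let Ω ⊆ ℝ³ be a bounded open set with 0 ∉ closure(Ω), r > 0, T the inversion in the sphere of radius r centered at the origin, σ the 2-dimensional Hausdorff measure restricted to ∂Ω, and σ* the 2-dimensional Hausdorff measure restricted to ∂Ω* := T(∂Ω). Let ν : ℝ³ → ℝ³ be any map, and define ν*(T x) := R_x ν(x) on ∂Ω*, where R_x = I − 2(x/|x|)(x/|x|)ᵗ. Let φ : ℝ³ → ℝ be bounded Borel measurable with σ(∂Ω) < ∞ and define φ*(T y) := φ(y)|y|³/r³. Then for every x ∈ ∂Ω such that y ↦ Γ(x−y)φ(y) and y ↦ ⟨ν(x), ∇Γ(x−y)⟩φ(y) are σ-integrable, ∫_{∂Ω*} ⟨ν*(Tx), ∇Γ(Tx − z)⟩ φ*(z) dσ*(z) = (|x|³/r³) ∫_{∂Ω} ⟨ν(x), ∇Γ(x − y)⟩ φ(y) dσ(y) + (|x| ⟨x, ν(x)⟩ / r³) ∫_{∂Ω} Γ(x − y) φ(y) dσ(y), where Γ(z) = −1/(4π|z|) and ∇Γ(z) = z/(4π|z|³). -/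

import Mathlib

open MeasureTheory
open scoped Real RealInnerProductSpace ENNReal

namespace NPAux
noncomputable abbrev E3 := EuclideanSpace ℝ (Fin 3)

noncomputable def T0 (r : ℝ) (x : E3) : E3 := (r ^ 2 / ‖x‖ ^ 2) • x

lemma measurable_T0 (r : ℝ) : Measurable (T0 r) := by
  apply Measurable.smul (f := fun x : E3 => r ^ 2 / ‖x‖ ^ 2) (g := id)
  · exact (measurable_const.div ((measurable_norm).pow_const 2))
  · exact measurable_id

lemma norm_T0 (r : ℝ) (hr : 0 < r) {x : E3} (hx : x ≠ 0) : ‖T0 r x‖ = r ^ 2 / ‖x‖ := by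
  have hx0 : (0:ℝ) < ‖x‖ := norm_pos_iff.mpr hx
  rw [T0, norm_smul, Real.norm_eq_abs, abs_of_nonneg (by positivity)]
  field_simp

lemma T0_invol (r : ℝ) (hr : 0 < r) {x : E3} (hx : x ≠ 0) : T0 r (T0 r x) = x := by
  have hx0 : (0:ℝ) < ‖x‖ := norm_pos_iff.mpr hx
  rw [show T0 r (T0 r x) = (r ^ 2 / ‖T0 r x‖ ^ 2) • T0 r x from rfl, norm_T0 r hr hx, T0,
    smul_smul]
  have : r ^ 2 / (r ^ 2 / ‖x‖) ^ 2 * (r ^ 2 / ‖x‖ ^ 2) = 1 := by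
    field_simp
  rw [this, one_smul]

lemma norm_T0_sub (r : ℝ) (hr : 0 < r) {x y : E3} (hx : x ≠ 0) (hy : y ≠ 0) :
    ‖T0 r x - T0 r y‖ = r ^ 2 * ‖x - y‖ / (‖x‖ * ‖y‖) := by
  have hx0 : (0:ℝ) < ‖x‖ := norm_pos_iff.mpr hx
  have hy0 : (0:ℝ) < ‖y‖ := norm_pos_iff.mpr hy
  have h1 : ‖T0 r x - T0 r y‖ ^ 2 = (r ^ 2 * ‖x - y‖ / (‖x‖ * ‖y‖)) ^ 2 := by
    rw [norm_sub_sq_real]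
    have e1 : ‖T0 r x‖ ^ 2 = r ^ 4 / ‖x‖ ^ 2 := by
      rw [norm_T0 r hr hx]; field_simp
    have e2 : ‖T0 r y‖ ^ 2 = r ^ 4 / ‖y‖ ^ 2 := by
      rw [norm_T0 r hr hy]; field_simp
    have e3 : ⟪T0 r x, T0 r y⟫ = (r ^ 4 / (‖x‖ ^ 2 * ‖y‖ ^ 2)) * ⟪x, y⟫ := by
      rw [T0, T0, real_inner_smul_left, real_inner_smul_right]; ring
    have e4 : ‖x - y‖ ^ 2 = ‖x‖ ^ 2 - 2 * ⟪x, y⟫ + ‖y‖ ^ 2 := norm_sub_sq_real x y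
    rw [e1, e2, e3, div_pow, mul_pow, e4]
    field_simp
    ring
  have := congrArg Real.sqrt h1
  rwa [Real.sqrt_sq (norm_nonneg _), Real.sqrt_sq (by positivity)] at this

end NPAux

namespace NPAux

/-- Lipschitz bound for the inversion on the region `{a ≤ ‖y‖}`. -/
lemma lipschitzOnWith_T0 (r : ℝ) (hr : 0 < r) {a : ℝ} (ha : 0 < a) :
    LipschitzOnWith (Real.toNNReal (r ^ 2 / a ^ 2)) (T0 r) {y : E3 | a ≤ ‖y‖} := by
  rw [lipschitzOnWith_iff_dist_le_mul]
  intro x hx y hy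
  have hxa : a ≤ ‖x‖ := hx
  have hya : a ≤ ‖y‖ := hy
  have hx0 : x ≠ 0 := fun h => by simp [h] at hxa; nlinarith
  have hy0 : y ≠ 0 := fun h => by simp [h] at hya; nlinarith
  rw [dist_eq_norm, dist_eq_norm, norm_T0_sub r hr hx0 hy0,
    Real.coe_toNNReal _ (by positivity)]
  have h1 : a * a ≤ ‖x‖ * ‖y‖ := by nlinarith [norm_nonneg x, norm_nonneg y]
  have hx0' : (0:ℝ) < ‖x‖ := norm_pos_iff.mpr hx0
  have hy0' : (0:ℝ) < ‖y‖ := norm_pos_iff.mpr hy0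
  calc r ^ 2 * ‖x - y‖ / (‖x‖ * ‖y‖) ≤ r ^ 2 * ‖x - y‖ / (a * a) := by
        exact div_le_div_of_nonneg_left (by positivity) (by positivity) h1
    _ = r ^ 2 / a ^ 2 * ‖x - y‖ := by ring

lemma hm_image_le (r : ℝ) (hr : 0 < r) {a : ℝ} (ha : 0 < a) {u : Set E3}
    (hu : ∀ y ∈ u, a ≤ ‖y‖) :
    μH[2] (T0 r '' u) ≤ ENNReal.ofReal ((r ^ 2 / a ^ 2) ^ 2) * μH[2] u := by
  have h := ((lipschitzOnWith_T0 r hr ha).mono hu).hausdorffMeasure_image_le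
    (d := 2) (by norm_num)
  refine h.trans (le_of_eq ?_)
  congr 1
  rw [show ((2:ℝ)) = ((2:ℕ):ℝ) by norm_num, ENNReal.rpow_natCast,
    ENNReal.ofReal, ← ENNReal.coe_pow]
  congr 1
  rw [← Real.toNNReal_pow (by positivity)]

end NPAux

namespace NPAux

lemma measure_eq_tsum_inter {α : Type*} [MeasurableSpace α] (μ : Measure α) {X : Set α}
    {B : ℤ → Set α} (hB : ∀ k, MeasurableSet (B k)) (hd : Pairwise (Function.onFun Disjoint B))
    (hX : X ⊆ ⋃ k, B k) : μ X = ∑' k, μ (X ∩ B k) := by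
  apply le_antisymm
  · calc μ X = μ (⋃ k, X ∩ B k) := by rw [← Set.inter_iUnion, Set.inter_eq_left.mpr hX]
      _ ≤ ∑' k, μ (X ∩ B k) := measure_iUnion_le _
  · set Y := toMeasurable μ X ∩ ⋃ k, B k with hY
    have hYm : MeasurableSet Y :=
      (measurableSet_toMeasurable μ X).inter (MeasurableSet.iUnion hB)
    have hXY : X ⊆ Y := Set.subset_inter (subset_toMeasurable μ X) hX
    have hμY : μ Y = μ X :=
      le_antisymm ((measure_mono Set.inter_subset_left).trans
        (measure_toMeasurable X).le) (measure_mono hXY)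
    calc ∑' k, μ (X ∩ B k) ≤ ∑' k, μ (Y ∩ B k) :=
          ENNReal.tsum_le_tsum fun k => measure_mono (Set.inter_subset_inter_left _ hXY)
      _ = μ (⋃ k, Y ∩ B k) := (measure_iUnion
          (hd.mono fun i j h => h.mono Set.inter_subset_right Set.inter_subset_right)
          (fun k => hYm.inter (hB k))).symm
      _ ≤ μ Y := measure_mono (Set.iUnion_subset fun k => Set.inter_subset_left)
      _ = μ X := hμY

lemma le_of_forall_ofReal_pow {x y : ℝ≥0∞}
    (h : ∀ c : ℝ, 1 < c → x ≤ ENNReal.ofReal (c ^ 4) * y) : x ≤ y := by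
  rcases eq_or_ne y ⊤ with hy | hy
  · exact hy ▸ le_top
  · have h1 : Filter.Tendsto (fun n : ℕ => (1 + 1 / ((n : ℝ) + 1)) ^ 4)
        Filter.atTop (nhds 1) := by
      have : Filter.Tendsto (fun n : ℕ => 1 + 1 / ((n : ℝ) + 1)) Filter.atTop (nhds 1) := by
        have := tendsto_one_div_add_atTop_nhds_zero_nat (𝕜 := ℝ)
        simpa using Filter.Tendsto.const_add 1 this
      simpa using this.pow 4
    have h2 : Filter.Tendsto
        (fun n : ℕ => ENNReal.ofReal ((1 + 1 / ((n : ℝ) + 1)) ^ 4) * y)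
        Filter.atTop (nhds (1 * y)) := by
      apply ENNReal.Tendsto.mul_const _ (Or.inr hy)
      have := (ENNReal.continuous_ofReal.tendsto 1).comp h1
      simpa [Function.comp_def] using this
    rw [one_mul] at h2
    refine ge_of_tendsto' h2 fun n => h _ ?_
    have : (0:ℝ) < 1 / ((n : ℝ) + 1) := by positivity
    linarith

end NPAux

namespace NPAux

noncomputable def ρ (r : ℝ) (y : E3) : ℝ≥0∞ := ENNReal.ofReal (r ^ 4 / ‖y‖ ^ 4)

lemma measurable_ρ (r : ℝ) : Measurable (ρ r) :=
  ENNReal.measurable_ofReal.comp (measurable_const.div (measurable_norm.pow_const 4))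

lemma hm_image_eq (r : ℝ) (hr : 0 < r) {E : Set E3} (hE : MeasurableSet E)
    (hE0 : ∀ y ∈ E, y ≠ 0) :
    μH[2] (T0 r '' E) = ∫⁻ y in E, ρ r y ∂(μH[2] : Measure E3) := by
  set μ : Measure E3 := μH[2] with hμ
  set I := ∫⁻ y in E, ρ r y ∂μ with hI
  suffices h : ∀ c : ℝ, 1 < c →
      μ (T0 r '' E) ≤ ENNReal.ofReal (c ^ 4) * I ∧
      I ≤ ENNReal.ofReal (c ^ 4) * μ (T0 r '' E) by
    exact le_antisymm (le_of_forall_ofReal_pow fun c hc => (h c hc).1)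
      (le_of_forall_ofReal_pow fun c hc => (h c hc).2)
  intro c hc
  have hc0 : (0:ℝ) < c := lt_trans one_pos hc
  set A : ℤ → Set E3 := fun k => {y | c ^ k ≤ ‖y‖ ∧ ‖y‖ < c ^ (k + 1)} with hA
  set B : ℤ → Set E3 := fun k => {z | r ^ 2 / c ^ (k + 1) < ‖z‖ ∧ ‖z‖ ≤ r ^ 2 / c ^ k} with hB
  have hAm : ∀ k, MeasurableSet (A k) := fun k =>
    (measurableSet_le measurable_const measurable_norm).inter
      (measurableSet_lt measurable_norm measurable_const)
  have hBm : ∀ k, MeasurableSet (B k) := fun k =>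
    (measurableSet_lt measurable_const measurable_norm).inter
      (measurableSet_le measurable_norm measurable_const)
  have hmono : ∀ {i j : ℤ}, i ≤ j → (c:ℝ) ^ i ≤ c ^ j := fun h =>
    zpow_le_zpow_right₀ hc.le h
  have hAd : Pairwise (Function.onFun Disjoint A) := by
    intro i j hij
    rw [Function.onFun, Set.disjoint_left]
    rintro y ⟨hi1, hi2⟩ ⟨hj1, hj2⟩
    rcases hij.lt_or_gt with h | h
    · exact absurd (lt_of_lt_of_le hi2 (hmono h)) (not_lt.mpr hj1)
    · exact absurd (lt_of_lt_of_le hj2 (hmono h)) (not_lt.mpr hi1)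
  have hBd : Pairwise (Function.onFun Disjoint B) := by
    intro i j hij
    rw [Function.onFun, Set.disjoint_left]
    rintro z ⟨hi1, hi2⟩ ⟨hj1, hj2⟩
    rcases hij.lt_or_gt with h | h
    · have : r ^ 2 / c ^ j ≤ r ^ 2 / c ^ (i+1) :=
        div_le_div_of_nonneg_left (by positivity) (by positivity) (hmono h)
      exact absurd (hj2.trans this) (not_le.mpr hi1)
    · have : r ^ 2 / c ^ i ≤ r ^ 2 / c ^ (j+1) :=
        div_le_div_of_nonneg_left (by positivity) (by positivity) (hmono h)
      exact absurd (hi2.trans this) (not_le.mpr hj1)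
  have hEcover : E = ⋃ k, E ∩ A k := by
    ext y
    simp only [Set.mem_iUnion, Set.mem_inter_iff]
    constructor
    · intro hy
      obtain ⟨k, hk1, hk2⟩ := exists_mem_Ico_zpow (norm_pos_iff.mpr (hE0 y hy)) hc
      exact ⟨k, hy, hk1, hk2⟩
    · rintro ⟨k, hk, _⟩; exact hk
  have hnormT0 : ∀ y ∈ E, ‖T0 r y‖ = r ^ 2 / ‖y‖ := fun y hy => norm_T0 r hr (hE0 y hy)
  have himg : ∀ k, T0 r '' (E ∩ A k) = (T0 r '' E) ∩ B k := by
    intro k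
    ext z
    constructor
    · rintro ⟨y, ⟨hyE, hy1, hy2⟩, rfl⟩
      have hy0 : (0:ℝ) < ‖y‖ := lt_of_lt_of_le (by positivity) hy1
      refine ⟨⟨y, hyE, rfl⟩, ?_, ?_⟩ <;> rw [hnormT0 y hyE]
      · exact (div_lt_div_iff_of_pos_left (by positivity) (by positivity) hy0).mpr hy2
      · exact (div_le_div_iff_of_pos_left (by positivity) hy0 (by positivity)).mpr hy1
    · rintro ⟨⟨y, hyE, rfl⟩, hz1, hz2⟩
      have hy0 : (0:ℝ) < ‖y‖ := norm_pos_iff.mpr (hE0 y hyE)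
      rw [hnormT0 y hyE] at hz1 hz2
      refine ⟨y, ⟨hyE, ?_, ?_⟩, rfl⟩
      · exact (div_le_div_iff_of_pos_left (by positivity) hy0 (by positivity)).mp hz2
      · exact (div_lt_div_iff_of_pos_left (by positivity) (by positivity) hy0).mp hz1
  have himgsub : T0 r '' E ⊆ ⋃ k, B k := by
    rintro z ⟨y, hyE, rfl⟩
    have hyuk : y ∈ ⋃ k, E ∩ A k := hEcover ▸ hyE
    obtain ⟨k, hk⟩ := Set.mem_iUnion.mp hyuk
    have : T0 r y ∈ T0 r '' (E ∩ A k) := ⟨y, hk, rfl⟩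
    rw [himg k] at this
    exact Set.mem_iUnion.mpr ⟨k, this.2⟩
  have hsum1 : μ (T0 r '' E) = ∑' k, μ (T0 r '' (E ∩ A k)) := by
    rw [measure_eq_tsum_inter μ hBm hBd himgsub]
    congr 1; funext k; rw [himg k]
  have hsum2 : I = ∑' k, ∫⁻ y in E ∩ A k, ρ r y ∂μ := by
    rw [hI]
    conv_lhs => rw [hEcover]
    exact lintegral_iUnion (fun k => hE.inter (hAm k))
      (hAd.mono fun i j h => h.mono Set.inter_subset_right Set.inter_subset_right) _
  -- per-k bounds
  have key1 : ∀ k, μ (T0 r '' (E ∩ A k)) ≤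
      ENNReal.ofReal (c ^ 4) * ∫⁻ y in E ∩ A k, ρ r y ∂μ := by
    intro k
    have ht : (0:ℝ) < c ^ k := by positivity
    have step1 : μ (T0 r '' (E ∩ A k)) ≤
        ENNReal.ofReal ((r ^ 2 / (c ^ k) ^ 2) ^ 2) * μ (E ∩ A k) :=
      hm_image_le r hr ht (fun y hy => hy.2.1)
    have step2 : ENNReal.ofReal (r ^ 4 / (c ^ (k+1)) ^ 4) * μ (E ∩ A k) ≤
        ∫⁻ y in E ∩ A k, ρ r y ∂μ := by
      rw [← setLIntegral_const]
      refine setLIntegral_mono (measurable_ρ r) fun y hy => ?_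
      refine ENNReal.ofReal_le_ofReal ?_
      have hy4 : ‖y‖ ^ 4 ≤ (c ^ (k+1)) ^ 4 :=
        pow_le_pow_left₀ (norm_nonneg y) hy.2.2.le 4
      have hy0 : (0:ℝ) < ‖y‖ := lt_of_lt_of_le ht hy.2.1
      exact div_le_div_of_nonneg_left (by positivity) (by positivity) hy4
    have harith : ENNReal.ofReal ((r ^ 2 / (c ^ k) ^ 2) ^ 2)
        = ENNReal.ofReal (c ^ 4) * ENNReal.ofReal (r ^ 4 / (c ^ (k+1)) ^ 4) := by
      rw [← ENNReal.ofReal_mul (by positivity)]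
      congr 1
      rw [zpow_add_one₀ hc0.ne']
      field_simp
    calc μ (T0 r '' (E ∩ A k))
        ≤ ENNReal.ofReal ((r ^ 2 / (c ^ k) ^ 2) ^ 2) * μ (E ∩ A k) := step1
      _ = ENNReal.ofReal (c ^ 4) * (ENNReal.ofReal (r ^ 4 / (c ^ (k+1)) ^ 4) * μ (E ∩ A k)) := by
          rw [harith, mul_assoc]
      _ ≤ ENNReal.ofReal (c ^ 4) * ∫⁻ y in E ∩ A k, ρ r y ∂μ := by
          exact mul_le_mul_right step2 _
  have key2 : ∀ k, (∫⁻ y in E ∩ A k, ρ r y ∂μ) ≤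
      ENNReal.ofReal (c ^ 4) * μ (T0 r '' (E ∩ A k)) := by
    intro k
    have ht : (0:ℝ) < c ^ k := by positivity
    have ht1 : (0:ℝ) < c ^ (k+1) := by positivity
    have stepA : (∫⁻ y in E ∩ A k, ρ r y ∂μ) ≤
        ENNReal.ofReal (r ^ 4 / (c ^ k) ^ 4) * μ (E ∩ A k) := by
      rw [← setLIntegral_const]
      refine setLIntegral_mono measurable_const fun y hy => ?_
      refine ENNReal.ofReal_le_ofReal ?_
      have hy0 : (0:ℝ) < ‖y‖ := lt_of_lt_of_le ht hy.2.1
      have hy4 : (c ^ k) ^ 4 ≤ ‖y‖ ^ 4 := pow_le_pow_left₀ ht.le hy.2.1 4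
      exact div_le_div_of_nonneg_left (by positivity) (by positivity) hy4
    have hback : T0 r '' (T0 r '' (E ∩ A k)) = E ∩ A k := by
      rw [Set.image_image]
      have : ∀ y ∈ E ∩ A k, T0 r (T0 r y) = y := fun y hy => T0_invol r hr (hE0 y hy.1)
      calc (fun y => T0 r (T0 r y)) '' (E ∩ A k) = id '' (E ∩ A k) :=
            Set.image_congr this
        _ = E ∩ A k := Set.image_id _
    have stepB : μ (E ∩ A k) ≤
        ENNReal.ofReal ((r ^ 2 / (r ^ 2 / c ^ (k+1)) ^ 2) ^ 2) * μ (T0 r '' (E ∩ A k)) := by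
      have hbound : ∀ z ∈ T0 r '' (E ∩ A k), r ^ 2 / c ^ (k+1) ≤ ‖z‖ := by
        rintro z ⟨y, hy, rfl⟩
        rw [hnormT0 y hy.1]
        have hy0 : (0:ℝ) < ‖y‖ := lt_of_lt_of_le ht hy.2.1
        exact (div_le_div_iff_of_pos_left (by positivity) (by positivity) hy0).mpr hy.2.2.le
      have := hm_image_le r hr (by positivity : (0:ℝ) < r ^ 2 / c ^ (k+1)) hbound
      rwa [hback] at this
    have harith : ENNReal.ofReal (r ^ 4 / (c ^ k) ^ 4) *
        ENNReal.ofReal ((r ^ 2 / (r ^ 2 / c ^ (k+1)) ^ 2) ^ 2) = ENNReal.ofReal (c ^ 4) := by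
      rw [← ENNReal.ofReal_mul (by positivity)]
      congr 1
      rw [zpow_add_one₀ hc0.ne']
      field_simp
    calc (∫⁻ y in E ∩ A k, ρ r y ∂μ)
        ≤ ENNReal.ofReal (r ^ 4 / (c ^ k) ^ 4) * μ (E ∩ A k) := stepA
      _ ≤ ENNReal.ofReal (r ^ 4 / (c ^ k) ^ 4) *
          (ENNReal.ofReal ((r ^ 2 / (r ^ 2 / c ^ (k+1)) ^ 2) ^ 2) * μ (T0 r '' (E ∩ A k))) :=
          mul_le_mul_right stepB _
      _ = ENNReal.ofReal (c ^ 4) * μ (T0 r '' (E ∩ A k)) := by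
          rw [← mul_assoc, harith]
  constructor
  · rw [hsum1, hsum2, ← ENNReal.tsum_mul_left]
    exact ENNReal.tsum_le_tsum key1
  · rw [hsum1, hsum2, ← ENNReal.tsum_mul_left]
    exact ENNReal.tsum_le_tsum key2

end NPAux

namespace NPAux

lemma measure_restrict_image (r : ℝ) (hr : 0 < r) {s : Set E3} (hs : MeasurableSet s)
    (hs0 : ∀ y ∈ s, y ≠ 0) :
    (μH[2] : Measure E3).restrict (T0 r '' s) =
      Measure.map (T0 r) (((μH[2] : Measure E3).restrict s).withDensity (ρ r)) := by
  ext B hB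
  have hpre : MeasurableSet (T0 r ⁻¹' B) := (measurable_T0 r) hB
  rw [Measure.map_apply (measurable_T0 r) hB, withDensity_apply _ hpre,
    Measure.restrict_restrict hpre, Measure.restrict_apply hB]
  have hset : T0 r '' (T0 r ⁻¹' B ∩ s) = B ∩ (T0 r '' s) := by
    ext z
    constructor
    · rintro ⟨y, ⟨hyB, hys⟩, rfl⟩
      exact ⟨hyB, y, hys, rfl⟩
    · rintro ⟨hzB, y, hys, rfl⟩
      exact ⟨y, ⟨hzB, hys⟩, rfl⟩
  rw [← hset, hm_image_eq r hr (hpre.inter hs) (fun y hy => hs0 y hy.2)]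

lemma pointwise_alg (r : ℝ) (hr : 0 < r) (x y : E3) (hx : x ≠ 0) (hy : y ≠ 0)
    (v : E3) (p : ℝ) :
    (r ^ 4 / ‖y‖ ^ 4) *
        (⟪v - (2 * ⟪x, v⟫ / ‖x‖ ^ 2) • x,
            (4 * π * ‖T0 r x - T0 r y‖ ^ 3)⁻¹ • (T0 r x - T0 r y)⟫ * (p * ‖y‖ ^ 3 / r ^ 3))
      = (‖x‖ ^ 3 / r ^ 3) * (⟪v, (4 * π * ‖x - y‖ ^ 3)⁻¹ • (x - y)⟫ * p)
        + (‖x‖ * ⟪x, v⟫ / r ^ 3) * ((-1 / (4 * π * ‖x - y‖)) * p) := by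
  rcases eq_or_ne y x with rfl | hyx
  · simp [sub_self]
  have hnx : (0:ℝ) < ‖x‖ := norm_pos_iff.mpr hx
  have hny : (0:ℝ) < ‖y‖ := norm_pos_iff.mpr hy
  have hd : (0:ℝ) < ‖x - y‖ := by
    rw [norm_pos_iff, sub_ne_zero]; exact fun h => hyx h.symm
  have hD := norm_T0_sub r hr hx hy
  have hP : ⟪x, y⟫ = (‖x‖ ^ 2 + ‖y‖ ^ 2 - ‖x - y‖ ^ 2) / 2 := by
    have := norm_sub_sq_real x y; linarith
  rw [hD]
  simp only [T0, inner_sub_left, inner_sub_right, real_inner_smul_left, real_inner_smul_right,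
    real_inner_self_eq_norm_sq, real_inner_comm v x]
  rw [hP]
  have hπ : (π : ℝ) ≠ 0 := Real.pi_ne_zero
  field_simp
  ring

end NPAux


open NPAux

/-- Lemma 3.1(ii), `d = 3`: transformation of the Neumann–Poincaré operator under
inversion in a sphere centered at an exterior point `0 ∉ closure Ω`:
`K*_{∂Ω*}[φ*](Tx) = (|x|³/r³) K*_{∂Ω}[φ](x) + (|x|(x·ν_x)/r³) S_{∂Ω}[φ](x)`,
with `Γ(z) = −1/(4π|z|)`, `∇Γ(z) = z/(4π|z|³)`, `φ*(Ty) = φ(y)|y|³/r³`,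
and `ν*(Tx) = R_x ν(x)`. -/
theorem np_inversion_exterior_dim3
    (r : ℝ) (hr : 0 < r) (Ω : Set (EuclideanSpace ℝ (Fin 3)))
    (hopen : IsOpen Ω) (hbd : Bornology.IsBounded Ω)
    (h0 : (0 : EuclideanSpace ℝ (Fin 3)) ∉ closure Ω)
    (T : EuclideanSpace ℝ (Fin 3) → EuclideanSpace ℝ (Fin 3))
    (hT : ∀ x : EuclideanSpace ℝ (Fin 3), x ≠ 0 → T x = (r ^ 2 / ‖x‖ ^ 2) • x)
    (σ σs : Measure (EuclideanSpace ℝ (Fin 3)))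
    (hσ : σ = μH[2].restrict (frontier Ω))
    (hσs : σs = μH[2].restrict (T '' frontier Ω))
    (hfin : σ (frontier Ω) < ⊤)
    (R : EuclideanSpace ℝ (Fin 3) → EuclideanSpace ℝ (Fin 3) → EuclideanSpace ℝ (Fin 3))
    (hR : ∀ x v : EuclideanSpace ℝ (Fin 3), x ≠ 0 →
      R x v = v - (2 * ⟪x, v⟫ / ‖x‖ ^ 2) • x)
    (ν νs : EuclideanSpace ℝ (Fin 3) → EuclideanSpace ℝ (Fin 3))
    (hνs : ∀ x ∈ frontier Ω, νs (T x) = R x (ν x))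
    (φ : EuclideanSpace ℝ (Fin 3) → ℝ) (hφmeas : Measurable φ)
    (hφbdd : ∃ C, ∀ y, |φ y| ≤ C)
    (φs : EuclideanSpace ℝ (Fin 3) → ℝ)
    (hφs : ∀ y ∈ frontier Ω, φs (T y) = φ y * ‖y‖ ^ 3 / r ^ 3)
    (x : EuclideanSpace ℝ (Fin 3)) (hxΩ : x ∈ frontier Ω)
    (hint1 : Integrable (fun y => (-1 / (4 * π * ‖x - y‖)) * φ y) σ)
    (hint2 : Integrable
      (fun y => ⟪ν x, (4 * π * ‖x - y‖ ^ 3)⁻¹ • (x - y)⟫ * φ y) σ) :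
    ∫ z, ⟪νs (T x), (4 * π * ‖T x - z‖ ^ 3)⁻¹ • (T x - z)⟫ * φs z ∂σs =
      (‖x‖ ^ 3 / r ^ 3) *
          ∫ y, ⟪ν x, (4 * π * ‖x - y‖ ^ 3)⁻¹ • (x - y)⟫ * φ y ∂σ
        + (‖x‖ * ⟪x, ν x⟫ / r ^ 3) *
          ∫ y, (-1 / (4 * π * ‖x - y‖)) * φ y ∂σ := by
  subst hσ hσs
  have hs : MeasurableSet (frontier Ω) := isClosed_frontier.measurableSet
  have hs0 : ∀ y ∈ frontier Ω, y ≠ 0 := by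
    intro y hy h
    exact h0 (h ▸ frontier_subset_closure hy)
  have hx0 : x ≠ 0 := hs0 x hxΩ
  have hTs : T '' frontier Ω = T0 r '' frontier Ω :=
    Set.image_congr fun y hy => (hT y (hs0 y hy)).trans rfl
  have hT0eq : ∀ y ∈ frontier Ω, T y = T0 r y := fun y hy => hT y (hs0 y hy)
  -- the image set is compact, hence measurable
  have hscomp : IsCompact (frontier Ω) :=
    Metric.isCompact_of_isClosed_isBounded isClosed_frontier
      (hbd.closure.subset frontier_subset_closure)
  have hT0cont : ContinuousOn (T0 r) (frontier Ω) := by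
    apply ContinuousOn.smul (f := fun y : E3 => r ^ 2 / ‖y‖ ^ 2) _ continuousOn_id
    exact continuousOn_const.div ((continuous_norm.pow 2).continuousOn)
      (fun y hy => pow_ne_zero 2 (norm_ne_zero_iff.mpr (hs0 y hy)))
  have himgMeas : MeasurableSet (T0 r '' frontier Ω) :=
    (hscomp.image_of_continuousOn hT0cont).isClosed.measurableSet
  -- notation
  set g : EuclideanSpace ℝ (Fin 3) → ℝ :=
    fun z => ⟪νs (T x), (4 * π * ‖T x - z‖ ^ 3)⁻¹ • (T x - z)⟫ * φs z with hg
  set gt : EuclideanSpace ℝ (Fin 3) → ℝ :=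
    fun z => ⟪νs (T x), (4 * π * ‖T x - z‖ ^ 3)⁻¹ • (T x - z)⟫ *
      (φ (T0 r z) * ‖T0 r z‖ ^ 3 / r ^ 3) with hgt
  have hgtmeas : Measurable gt := by
    apply Measurable.mul
    · apply Measurable.inner measurable_const
      exact (((measurable_const.sub measurable_id).norm.pow_const 3).const_mul
        (4 * π)).inv.smul (measurable_const.sub measurable_id)
    · exact ((hφmeas.comp (measurable_T0 r)).mul
        (((measurable_T0 r).norm).pow_const 3)).div_const _
  have hgeq : ∀ z ∈ T0 r '' frontier Ω, g z = gt z := by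
    rintro z ⟨y, hy, rfl⟩
    have hy0 : y ≠ 0 := hs0 y hy
    have h1 : T0 r (T0 r y) = y := T0_invol r hr hy0
    simp only [hg, hgt, h1]
    rw [← hT0eq y hy, hφs y hy]
  have hgaesm : AEStronglyMeasurable g ((μH[2] : Measure E3).restrict (T0 r '' frontier Ω)) := by
    refine hgtmeas.aestronglyMeasurable.congr ?_
    rw [Filter.EventuallyEq, ae_restrict_iff' himgMeas]
    exact Filter.Eventually.of_forall fun z hz => (hgeq z hz).symm
  -- the chain of transformations
  have hν' : ((μH[2] : Measure E3).restrict (frontier Ω)).withDensity (ρ r) =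
      ((μH[2] : Measure E3).restrict (frontier Ω)).withDensity
        (fun y => ((r ^ 4 / ‖y‖ ^ 4).toNNReal : ℝ≥0∞)) := rfl
  have hρ₀meas : Measurable fun y : E3 => Real.toNNReal (r ^ 4 / ‖y‖ ^ 4) :=
    measurable_real_toNNReal.comp (measurable_const.div (measurable_norm.pow_const 4))
  calc ∫ z, g z ∂((μH[2] : Measure E3).restrict (T '' frontier Ω))
      = ∫ z, g z ∂(Measure.map (T0 r)
          (((μH[2] : Measure E3).restrict (frontier Ω)).withDensity (ρ r))) := by
        rw [hTs, measure_restrict_image r hr hs hs0]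
    _ = ∫ y, g (T0 r y) ∂(((μH[2] : Measure E3).restrict (frontier Ω)).withDensity (ρ r)) := by
        apply integral_map (measurable_T0 r).aemeasurable
        rw [← measure_restrict_image r hr hs hs0]
        exact hgaesm
    _ = ∫ y, (Real.toNNReal (r ^ 4 / ‖y‖ ^ 4)) • g (T0 r y)
          ∂((μH[2] : Measure E3).restrict (frontier Ω)) := by
        rw [hν', integral_withDensity_eq_integral_smul hρ₀meas]
    _ = ∫ y, ((‖x‖ ^ 3 / r ^ 3) * (⟪ν x, (4 * π * ‖x - y‖ ^ 3)⁻¹ • (x - y)⟫ * φ y)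
          + (‖x‖ * ⟪x, ν x⟫ / r ^ 3) * ((-1 / (4 * π * ‖x - y‖)) * φ y))
          ∂((μH[2] : Measure E3).restrict (frontier Ω)) := by
        apply integral_congr_ae
        rw [Filter.EventuallyEq, ae_restrict_iff' hs]
        refine Filter.Eventually.of_forall fun y hy => ?_
        have hy0 : y ≠ 0 := hs0 y hy
        have h1 : g (T0 r y) = ⟪νs (T x), (4 * π * ‖T0 r x - T0 r y‖ ^ 3)⁻¹ •
            (T0 r x - T0 r y)⟫ * (φ y * ‖y‖ ^ 3 / r ^ 3) := by
          simp only [hg]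
          rw [← hT0eq y hy, hφs y hy, hT0eq x hxΩ]
        rw [NNReal.smul_def, Real.coe_toNNReal _ (by positivity), h1,
          hνs x hxΩ, hR x (ν x) hx0]
        exact pointwise_alg r hr x y hx0 hy0 (ν x) (φ y)
    _ = (‖x‖ ^ 3 / r ^ 3) *
          ∫ y, ⟪ν x, (4 * π * ‖x - y‖ ^ 3)⁻¹ • (x - y)⟫ * φ y
            ∂((μH[2] : Measure E3).restrict (frontier Ω))
        + (‖x‖ * ⟪x, ν x⟫ / r ^ 3) *
          ∫ y, (-1 / (4 * π * ‖x - y‖)) * φ y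
            ∂((μH[2] : Measure E3).restrict (frontier Ω)) := by
        rw [integral_add (hint2.const_mul _) (hint1.const_mul _),
          integral_const_mul, integral_const_mul]
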